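/- arXiv:cs/0610025 — 2 statements merged into one kernel-verified Lean document; each statement's English description precedes it below -/
import Mathlib

section
/- Let N ≥ 1, m ≥ 1, let u, u' : Fin m → (ZMod N → ZMod 4) and κ, κ' : Fin m → ZMod 4, and define s(t) = (1+i) · ∑_{k=0}^{m−1} 2^k · i^{u_k(t)} · i^{κ_k} and s'(t) = (1+i) · ∑_{l=0}^{m−1} 2^l · i^{u'_l(t)} · i^{κ'_l}. Fix τ ∈ ZMod N and suppose that for all k, l one has |θ_{u_k,u'_l}(τ)| ≤ 1 + √(N+1). Then |θ_{s,s'}(τ)| ≤ 2·(2^m − 1)²·(1 + √(N+1)). -/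
noncomputable def zi (a : ZMod 4) : ℂ := Complex.I ^ a.val

noncomputable def pcorr {N : ℕ} [NeZero N] (s s' : ZMod N → ℂ) (τ : ZMod N) : ℂ :=
  ∑ t : ZMod N, s (t + τ) * (starRingEnd ℂ) (s' t)

noncomputable def qcorr {N : ℕ} [NeZero N] (u v : ZMod N → ZMod 4) (τ : ZMod N) : ℂ :=
  ∑ t : ZMod N, zi (u (t + τ)) * (starRingEnd ℂ) (zi (v t))

lemma zi_abs (a : ZMod 4) : ‖zi a‖ = 1 := by
  simp [zi]

/-- Maximum-correlation bound for the canonical QAM family: if all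
pairwise component correlations at shift `τ` are bounded by `1 + √(N+1)`, then the
correlation of the two `4^m`-QAM sequences is bounded by `2(2^m - 1)²(1 + √(N+1))`. -/
theorem qam_correlation_bound (N m : ℕ) [NeZero N] (hm : 1 ≤ m)
    (u u' : Fin m → ZMod N → ZMod 4) (κ κ' : Fin m → ZMod 4) (τ : ZMod N)
    (hcorr : ∀ k l : Fin m,
      ‖qcorr (u k) (u' l) τ‖ ≤ 1 + Real.sqrt (N + 1)) :
    ‖pcorr
      (fun t => (1 + Complex.I) * ∑ k : Fin m, (2 : ℂ) ^ (k : ℕ) * zi (u k t) * zi (κ k))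
      (fun t => (1 + Complex.I) * ∑ l : Fin m, (2 : ℂ) ^ (l : ℕ) * zi (u' l t) * zi (κ' l))
      τ‖
    ≤ 2 * (2 ^ m - 1) ^ 2 * (1 + Real.sqrt (N + 1)) := by
  set c := starRingEnd ℂ
  have h2 : (1 + Complex.I) * c (1 + Complex.I) = 2 := by
    simp [c, Complex.ext_iff]; norm_num
  have key : pcorr
      (fun t => (1 + Complex.I) * ∑ k : Fin m, (2 : ℂ) ^ (k : ℕ) * zi (u k t) * zi (κ k))
      (fun t => (1 + Complex.I) * ∑ l : Fin m, (2 : ℂ) ^ (l : ℕ) * zi (u' l t) * zi (κ' l))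
      τ
      = ∑ k : Fin m, ∑ l : Fin m,
          2 * ((2 : ℂ) ^ (k : ℕ) * (2 : ℂ) ^ (l : ℕ) * zi (κ k)
            * c (zi (κ' l)) * qcorr (u k) (u' l) τ) := by
    have step : ∀ t : ZMod N,
        ((1 + Complex.I) * ∑ k : Fin m, (2 : ℂ) ^ (k : ℕ) * zi (u k (t + τ)) * zi (κ k)) *
          c ((1 + Complex.I) * ∑ l : Fin m, (2 : ℂ) ^ (l : ℕ) * zi (u' l t) * zi (κ' l))
        = ∑ k : Fin m, ∑ l : Fin m,
            2 * ((2 : ℂ) ^ (k : ℕ) * (2 : ℂ) ^ (l : ℕ) * zi (κ k) * c (zi (κ' l))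
              * (zi (u k (t + τ)) * c (zi (u' l t)))) := by
      intro t
      simp only [map_mul, map_sum, map_pow, map_ofNat]
      rw [mul_mul_mul_comm, h2, Finset.sum_mul_sum, Finset.mul_sum]
      refine Finset.sum_congr rfl fun k _ => ?_
      rw [Finset.mul_sum]
      refine Finset.sum_congr rfl fun l _ => ?_
      ring
    unfold pcorr
    rw [show (starRingEnd ℂ) = c from rfl]
    simp only [step]
    rw [Finset.sum_comm]
    refine Finset.sum_congr rfl fun k _ => ?_
    rw [Finset.sum_comm]
    refine Finset.sum_congr rfl fun l _ => ?_
    unfold qcorr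
    rw [Finset.mul_sum, Finset.mul_sum]
  rw [key]
  have hb : ∀ k l : Fin m,
      ‖2 * ((2 : ℂ) ^ (k : ℕ) * (2 : ℂ) ^ (l : ℕ) * zi (κ k)
        * c (zi (κ' l)) * qcorr (u k) (u' l) τ)‖
      ≤ 2 * ((2 : ℝ) ^ (k : ℕ) * (2 : ℝ) ^ (l : ℕ)) * (1 + Real.sqrt (N + 1)) := by
    intro k l
    have hp : (0:ℝ) ≤ 2 * ((2:ℝ) ^ (k:ℕ) * (2:ℝ) ^ (l:ℕ)) := by positivity
    simp only [norm_mul, norm_pow, zi_abs, c, Complex.norm_conj, mul_one, one_mul]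
    calc ‖(2:ℂ)‖ * (‖(2:ℂ)‖ ^ (k:ℕ) * ‖(2:ℂ)‖ ^ (l:ℕ) *
            ‖qcorr (u k) (u' l) τ‖)
        = 2 * ((2:ℝ) ^ (k:ℕ) * (2:ℝ) ^ (l:ℕ)) * ‖qcorr (u k) (u' l) τ‖ := by
          norm_num; ring
      _ ≤ 2 * ((2:ℝ) ^ (k:ℕ) * (2:ℝ) ^ (l:ℕ)) * (1 + Real.sqrt (N + 1)) :=
          mul_le_mul_of_nonneg_left (hcorr k l) hp
  calc ‖∑ k : Fin m, ∑ l : Fin m,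
          2 * ((2 : ℂ) ^ (k : ℕ) * (2 : ℂ) ^ (l : ℕ) * zi (κ k)
            * c (zi (κ' l)) * qcorr (u k) (u' l) τ)‖
      ≤ ∑ k : Fin m, ∑ l : Fin m,
          2 * ((2 : ℝ) ^ (k : ℕ) * (2 : ℝ) ^ (l : ℕ)) * (1 + Real.sqrt (N + 1)) := by
        refine (norm_sum_le _ _).trans ?_
        refine Finset.sum_le_sum fun k _ => ?_
        exact (norm_sum_le _ _).trans (Finset.sum_le_sum fun l _ => hb k l)
    _ = 2 * (2 ^ m - 1) ^ 2 * (1 + Real.sqrt (N + 1)) := by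
        have hgeom : ∑ k : Fin m, (2:ℝ) ^ (k:ℕ) = 2 ^ m - 1 := by
          rw [Fin.sum_univ_eq_sum_range, geom_sum_eq (by norm_num)]
          norm_num
        have expand : (∑ k : Fin m, (2:ℝ) ^ (k:ℕ)) * (∑ l : Fin m, (2:ℝ) ^ (l:ℕ)) *
            (2 * (1 + Real.sqrt (N + 1)))
            = ∑ k : Fin m, ∑ l : Fin m,
                2 * ((2:ℝ) ^ (k:ℕ) * (2:ℝ) ^ (l:ℕ)) * (1 + Real.sqrt (N + 1)) := by
          rw [Finset.sum_mul_sum, Finset.sum_mul]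
          refine Finset.sum_congr rfl fun k _ => ?_
          rw [Finset.sum_mul]
          exact Finset.sum_congr rfl fun l _ => by ring
        rw [← expand, hgeom]
        ring
end

section
/- Let N ≥ 1, m ≥ 1, let u : Fin m → (ZMod N → ZMod 4) and κ, κ' : Fin m → ZMod 4, and define s(t) = (1+i) · ∑_{k=0}^{m−1} 2^k · i^{u_k(t)} · i^{κ_k} and s'(t) = (1+i) · ∑_{k=0}^{m−1} 2^k · i^{u_k(t)} · i^{κ'_k}. Suppose that for all k ≠ l, |θ_{u_k,u_l}(0)| ≤ 1 + √(N+1). Setting Δ_k = i^{κ_k} − i^{κ'_k}, one has ∑_{t ∈ ZMod N} |s(t) − s'(t)|² ≥ 2·N·∑_{k=0}^{m−1} 4^k·|Δ_k|² − 2·(1 + √(N+1))·∑_{k ≠ l} 2^{k+l}·|Δ_k|·|Δ_l|. -/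
lemma zi_mul_conj (a : ZMod 4) : zi a * (starRingEnd ℂ) (zi a) = 1 := by
  rw [Complex.mul_conj]
  simp [zi, map_pow]

lemma qcorr_self {N : ℕ} [NeZero N] (u : ZMod N → ZMod 4) :
    qcorr u u 0 = (N : ℂ) := by
  unfold qcorr
  simp [zi_mul_conj, Finset.card_univ]


/-- Lower bound on the squared Euclidean distance between two data
modulations of the same `4^m`-QAM spreading sequence, in terms of `Δ_k = i^{κ_k} - i^{κ'_k}`,
assuming the distinct-index component correlations at shift `0` are bounded by `1 + √(N+1)`. -/
theorem qam_distance_lower_bound (N m : ℕ) [NeZero N] (hm : 1 ≤ m)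
    (u : Fin m → ZMod N → ZMod 4) (κ κ' : Fin m → ZMod 4)
    (hcorr : ∀ k l : Fin m, k ≠ l →
      ‖ (qcorr (u k) (u l) 0)‖ ≤ 1 + Real.sqrt (N + 1)) :
    ∑ t : ZMod N,
      ‖
        ((1 + Complex.I) * ∑ k : Fin m, (2 : ℂ) ^ (k : ℕ) * zi (u k t) * zi (κ k)
        - (1 + Complex.I) * ∑ k : Fin m, (2 : ℂ) ^ (k : ℕ) * zi (u k t) * zi (κ' k))‖ ^ 2
    ≥ 2 * N * ∑ k : Fin m, 4 ^ (k : ℕ) * ‖ (zi (κ k) - zi (κ' k))‖ ^ 2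
      - 2 * (1 + Real.sqrt (N + 1)) *
          ∑ k : Fin m, ∑ l : Fin m,
            if k = l then 0
            else 2 ^ ((k : ℕ) + (l : ℕ)) * ‖ (zi (κ k) - zi (κ' k))‖ *
              ‖ (zi (κ l) - zi (κ' l))‖ := by
  classical
  set C := 1 + Real.sqrt (N + 1) with hC
  set Δ : Fin m → ℂ := fun k => zi (κ k) - zi (κ' k) with hΔ
  set S : ZMod N → ℂ := fun t => ∑ k : Fin m, (2:ℂ)^(k:ℕ) * zi (u k t) * Δ k with hS
  set T : Fin m → Fin m → ℝ := fun k l =>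
    ((2:ℂ)^((k:ℕ)+(l:ℕ)) * Δ k * (starRingEnd ℂ) (Δ l) * qcorr (u k) (u l) 0).re with hT
  -- Step 1: pointwise rewrite of the summand
  have step1 : ∀ t : ZMod N,
      ‖(1 + Complex.I) * ∑ k : Fin m, (2 : ℂ) ^ (k : ℕ) * zi (u k t) * zi (κ k)
        - (1 + Complex.I) * ∑ k : Fin m, (2 : ℂ) ^ (k : ℕ) * zi (u k t) * zi (κ' k)‖ ^ 2
      = 2 * (S t * (starRingEnd ℂ) (S t)).re := by
    intro t
    have h1 : (1 + Complex.I) * ∑ k : Fin m, (2 : ℂ) ^ (k : ℕ) * zi (u k t) * zi (κ k)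
        - (1 + Complex.I) * ∑ k : Fin m, (2 : ℂ) ^ (k : ℕ) * zi (u k t) * zi (κ' k)
        = (1 + Complex.I) * S t := by
      rw [hS, ← mul_sub, ← Finset.sum_sub_distrib]
      congr 1
      refine Finset.sum_congr rfl fun k _ => ?_
      simp [hΔ]; ring
    rw [h1, Complex.sq_norm, Complex.normSq_mul, Complex.mul_conj, Complex.ofReal_re]
    simp [Complex.normSq_apply]
    exact Or.inl (by norm_num)
  -- Step 2: sum identity
  have step2 : ∑ t : ZMod N, S t * (starRingEnd ℂ) (S t)
      = ∑ k : Fin m, ∑ l : Fin m,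
          (2:ℂ)^((k:ℕ)+(l:ℕ)) * Δ k * (starRingEnd ℂ) (Δ l) * qcorr (u k) (u l) 0 := by
    have : ∀ t : ZMod N, S t * (starRingEnd ℂ) (S t)
        = ∑ k : Fin m, ∑ l : Fin m,
            ((2:ℂ)^(k:ℕ) * zi (u k t) * Δ k) *
              (starRingEnd ℂ) ((2:ℂ)^(l:ℕ) * zi (u l t) * Δ l) := by
      intro t
      rw [hS]
      rw [map_sum, Finset.sum_mul_sum]
    rw [Finset.sum_congr rfl fun t _ => this t, Finset.sum_comm]
    refine Finset.sum_congr rfl fun k _ => ?_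
    rw [Finset.sum_comm]
    refine Finset.sum_congr rfl fun l _ => ?_
    unfold qcorr
    rw [Finset.mul_sum]
    refine Finset.sum_congr rfl fun t _ => ?_
    simp only [add_zero, map_mul, map_pow, Complex.conj_ofNat]
    ring
  -- LHS rewrite
  have lhs_eq : ∑ t : ZMod N,
      ‖(1 + Complex.I) * ∑ k : Fin m, (2 : ℂ) ^ (k : ℕ) * zi (u k t) * zi (κ k)
        - (1 + Complex.I) * ∑ k : Fin m, (2 : ℂ) ^ (k : ℕ) * zi (u k t) * zi (κ' k)‖ ^ 2
      = 2 * ∑ k : Fin m, ∑ l : Fin m, T k l := by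
    rw [Finset.sum_congr rfl fun t _ => step1 t, ← Finset.mul_sum, ← Complex.re_sum, step2,
      Complex.re_sum]
    congr 1
    exact Finset.sum_congr rfl fun k _ => Complex.re_sum _ _
  -- diagonal terms
  have diag : ∀ k : Fin m, T k k = (N:ℝ) * (4 ^ (k:ℕ) * ‖Δ k‖ ^ 2) := by
    intro k
    have e1 : (2:ℂ)^((k:ℕ)+(k:ℕ)) * Δ k * (starRingEnd ℂ) (Δ k) * qcorr (u k) (u k) 0
        = (((N:ℝ) * (4 ^ (k:ℕ) * ‖Δ k‖ ^ 2) : ℝ) : ℂ) := by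
      rw [qcorr_self, show (2:ℂ)^((k:ℕ)+(k:ℕ)) * Δ k * (starRingEnd ℂ) (Δ k) * (N:ℂ)
          = (Δ k * (starRingEnd ℂ) (Δ k)) * ((2:ℂ)^((k:ℕ)+(k:ℕ)) * N) by ring,
        Complex.mul_conj, ← Complex.sq_norm]
      push_cast
      rw [show ((4:ℂ)^(k:ℕ)) = 2^(k:ℕ)*2^(k:ℕ) by rw [← mul_pow]; norm_num, pow_add]
      ring
    rw [hT]
    simp only [e1, Complex.ofReal_re]
  -- off-diagonal bound
  have offd : ∀ k l : Fin m, k ≠ l →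
      -(C * (2 ^ ((k:ℕ)+(l:ℕ)) * ‖Δ k‖ * ‖Δ l‖)) ≤ T k l := by
    intro k l hkl
    have h1 : -‖(2:ℂ)^((k:ℕ)+(l:ℕ)) * Δ k * (starRingEnd ℂ) (Δ l)
        * qcorr (u k) (u l) 0‖ ≤ T k l :=
      neg_le_of_abs_le (Complex.abs_re_le_norm _)
    refine le_trans (neg_le_neg ?_) h1
    rw [norm_mul, norm_mul, norm_mul, norm_pow, Complex.norm_conj]
    have h2 : ‖(2:ℂ)‖ = 2 := Complex.norm_two
    rw [h2]
    have hE : (0:ℝ) ≤ 2 ^ ((k:ℕ)+(l:ℕ)) * ‖Δ k‖ * ‖Δ l‖ := by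
      positivity
    calc C * (2 ^ ((k:ℕ)+(l:ℕ)) * ‖Δ k‖ * ‖Δ l‖)
        = (2 ^ ((k:ℕ)+(l:ℕ)) * ‖Δ k‖ * ‖Δ l‖) * C := by ring
      _ ≥ (2 ^ ((k:ℕ)+(l:ℕ)) * ‖Δ k‖ * ‖Δ l‖)
            * ‖qcorr (u k) (u l) 0‖ :=
          mul_le_mul_of_nonneg_left (hcorr k l hkl) hE
      _ = 2 ^ ((k:ℕ)+(l:ℕ)) * ‖Δ k‖ * ‖Δ l‖
            * ‖qcorr (u k) (u l) 0‖ := by ring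
  -- combine
  have key : ∑ k : Fin m, ∑ l : Fin m, T k l
      ≥ (N:ℝ) * ∑ k : Fin m, 4 ^ (k:ℕ) * ‖Δ k‖ ^ 2
        - C * ∑ k : Fin m, ∑ l : Fin m,
            (if k = l then 0
             else 2 ^ ((k:ℕ)+(l:ℕ)) * ‖Δ k‖ * ‖Δ l‖) := by
    have hsplit : (N:ℝ) * ∑ k : Fin m, 4 ^ (k:ℕ) * ‖Δ k‖ ^ 2
        - C * ∑ k : Fin m, ∑ l : Fin m,
            (if k = l then 0
             else 2 ^ ((k:ℕ)+(l:ℕ)) * ‖Δ k‖ * ‖Δ l‖)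
        = ∑ k : Fin m, ∑ l : Fin m,
            (if k = l then (N:ℝ) * (4 ^ (k:ℕ) * ‖Δ k‖ ^ 2)
             else -(C * (2 ^ ((k:ℕ)+(l:ℕ)) * ‖Δ k‖ * ‖Δ l‖))) := by
      rw [Finset.mul_sum, Finset.mul_sum, ← Finset.sum_sub_distrib]
      refine Finset.sum_congr rfl fun k _ => ?_
      have hdiag : (N:ℝ) * (4 ^ (k:ℕ) * ‖Δ k‖ ^ 2)
          = ∑ l : Fin m, (if k = l then (N:ℝ) * (4 ^ (k:ℕ) * ‖Δ k‖ ^ 2) else 0) := by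
        rw [Finset.sum_ite_eq]
        simp
      rw [Finset.mul_sum, hdiag, ← Finset.sum_sub_distrib]
      refine Finset.sum_congr rfl fun l _ => ?_
      by_cases hkl : k = l
      · simp [hkl]
      · simp [hkl]
    rw [hsplit]
    refine Finset.sum_le_sum fun k _ => Finset.sum_le_sum fun l _ => ?_
    by_cases hkl : k = l
    · subst hkl
      simp only [if_pos rfl]
      exact (diag k).ge
    · simp only [if_neg hkl]
      exact offd k l hkl
  rw [lhs_eq]
  have hfin : ∀ k : Fin m, ‖zi (κ k) - zi (κ' k)‖ = ‖Δ k‖ := fun k => rfl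
  simp only [hfin]
  linarith [key]
end
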